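/- For every integer n ≥ 5, the cycle graph C_n satisfies adim_2(C_n) = ⌈n/2⌉, adim_3(C_n) = n − ⌊n/5⌋, and adim_4(C_n) = n. -/

import Mathlib

open Finset

namespace AdjDim

noncomputable section
open Classical

variable {V W : Type*}

/-- Truncated distance `d_{G,2}(x,y) = min(d_G(x,y), 2)`:
`0` if `x = y`, `1` if `x` and `y` are adjacent, and `2` otherwise. -/
def d2 (G : SimpleGraph V) (x y : V) : ℕ :=
  if x = y then 0 else if G.Adj x y then 1 else 2

/-- `S` is a `k`-adjacency generator for `G`: every pair of distinct vertices is
distinguished (w.r.t. `d_{G,2}`) by at least `k` vertices of `S`. -/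
def IsKAdjGen (G : SimpleGraph V) [Fintype V] (k : ℕ) (S : Finset V) : Prop :=
  ∀ x y : V, x ≠ y → k ≤ (S.filter (fun w => d2 G x w ≠ d2 G y w)).card

/-- The `k`-adjacency dimension of `G`: the minimum cardinality of a
`k`-adjacency generator. -/
def adim (G : SimpleGraph V) [Fintype V] (k : ℕ) : ℕ :=
  sInf {n | ∃ S : Finset V, IsKAdjGen G k S ∧ S.card = n}

/-- `B` is a `k`-adjacency basis of `G`: a `k`-adjacency generator of minimum
cardinality. -/
def IsKAdjBasis (G : SimpleGraph V) [Fintype V] (k : ℕ) (B : Finset V) : Prop :=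
  IsKAdjGen G k B ∧ B.card = adim G k

/-- `G` is `k`-adjacency dimensional: `k` is the largest integer for which a
`k`-adjacency generator exists. -/
def IsKAdjDimensional (G : SimpleGraph V) [Fintype V] (k : ℕ) : Prop :=
  (∃ S : Finset V, IsKAdjGen G k S) ∧
    ∀ k' : ℕ, k < k' → ¬ ∃ S : Finset V, IsKAdjGen G k' S

/-- `C_G(x,y)`: the set of vertices distinguishing `x` and `y` w.r.t. `d_{G,2}`. -/
def CSet (G : SimpleGraph V) [Fintype V] (x y : V) : Finset V :=
  univ.filter (fun z => d2 G x z ≠ d2 G y z)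

/-- `C(G) = min_{x ≠ y} |C_G(x,y)|`. -/
def Cmin (G : SimpleGraph V) [Fintype V] : ℕ :=
  sInf {m | ∃ x y : V, x ≠ y ∧ (CSet G x y).card = m}

/-- `C_k(G)`: the union of the sets `C_G(x,y)` over pairs of distinct vertices
with `|C_G(x,y)| = k`. -/
def Ck (G : SimpleGraph V) [Fintype V] (k : ℕ) : Finset V :=
  univ.filter (fun z => ∃ x y : V, x ≠ y ∧ (CSet G x y).card = k ∧ z ∈ CSet G x y)

/-- Two distinct vertices `x, y` are twins: every other vertex is at the same
truncated distance from both. -/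
def Twins (G : SimpleGraph V) (x y : V) : Prop :=
  x ≠ y ∧ ∀ z : V, z ≠ x → z ≠ y → d2 G x z = d2 G y z

/-- The join `G + H` of two vertex-disjoint graphs. -/
def join (G : SimpleGraph V) (H : SimpleGraph W) : SimpleGraph (V ⊕ W) where
  Adj x y :=
    match x, y with
    | Sum.inl a, Sum.inl b => G.Adj a b
    | Sum.inr a, Sum.inr b => H.Adj a b
    | Sum.inl _, Sum.inr _ => True
    | Sum.inr _, Sum.inl _ => True
  symm := by
    constructor
    rintro (a | a) (b | b) h
    · exact G.adj_symm h
    · trivial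
    · trivial
    · exact H.adj_symm h
  loopless := by
    constructor
    rintro (a | a) h
    · exact G.irrefl h
    · exact H.irrefl h

/-- `K_1 + H`: the join of a one-vertex graph with `H`, i.e. `H` together with a
new universal vertex. -/
def K1join (H : SimpleGraph W) : SimpleGraph (Unit ⊕ W) :=
  join (⊥ : SimpleGraph Unit) H

section Cyc
open scoped Fin.NatCast
variable {n : ℕ} [NeZero n]

lemma natCast_fin_inj {i j : ℕ} (hi : i < n) (hj : j < n) (h : (i : Fin n) = j) : i = j := by
  have := congrArg Fin.val h
  rwa [Fin.val_natCast, Fin.val_natCast, Nat.mod_eq_of_lt hi, Nat.mod_eq_of_lt hj] at this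

lemma add_natCast_inj {x : Fin n} {i j : ℕ} (hi : i < n) (hj : j < n) :
    x + (i : Fin n) = x + (j : Fin n) ↔ i = j := by
  constructor
  · intro h; exact natCast_fin_inj hi hj (add_left_cancel h)
  · rintro rfl; rfl

lemma add_cast_add (v : Fin n) (a b : ℕ) : (v + (a : Fin n)) + (b : Fin n) = v + ((a + b : ℕ) : Fin n) := by
  push_cast; rw [add_assoc]

lemma shift_shift {x y : Fin n} (i j : ℕ) : x + ((i + j : ℕ) : Fin n) = y + (j : Fin n) ↔ x + (i : Fin n) = y := by
  rw [← add_cast_add, add_left_inj]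

/-- adjacency in the cycle graph -/
lemma adj_iff (hn : 5 ≤ n) (x w : Fin n) :
    (SimpleGraph.cycleGraph n).Adj x w ↔ w = x + ((1:ℕ) : Fin n) ∨ x = w + ((1:ℕ) : Fin n) := by
  have h1 : ((1:ℕ) : Fin n) = (1 : Fin n) := by push_cast; rfl
  rw [h1, SimpleGraph.cycleGraph_adj']
  have hv : (1 : Fin n).val = 1 := by
    have : (1 : Fin n) = ((1:ℕ) : Fin n) := by push_cast; rfl
    rw [this, Fin.val_natCast, Nat.mod_eq_of_lt (by omega)]
  constructor
  · rintro (h | h)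
    · right; have : x - w = 1 := by ext; rw [hv]; exact h
      rw [sub_eq_iff_eq_add] at this; rw [this, add_comm]
    · left; have : w - x = 1 := by ext; rw [hv]; exact h
      rw [sub_eq_iff_eq_add] at this; rw [this, add_comm]
  · rintro (rfl | rfl)
    · right; rw [add_sub_cancel_left, hv]
    · left; rw [add_sub_cancel_left, hv]

section P
variable (G : SimpleGraph (Fin n))

/-- the distinguishing predicate -/
def P (x y w : Fin n) : Prop := d2 G x w ≠ d2 G y w

omit [NeZero n] in
lemma P_symm {x y w : Fin n} : P G x y w ↔ P G y x w := ne_comm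

omit [NeZero n] in
lemma d2_self (x : Fin n) : d2 G x x = 0 := by simp [d2]

omit [NeZero n] in
lemma d2_ne_zero {x w : Fin n} (h : x ≠ w) : d2 G x w ≠ 0 := by
  unfold d2
  rw [if_neg h]
  split <;> omega

omit [NeZero n] in
lemma P_left {x y : Fin n} (hxy : x ≠ y) : P G x y x := by
  unfold P
  rw [d2_self]
  exact fun hh => d2_ne_zero G (Ne.symm hxy) hh.symm

omit [NeZero n] in
lemma P_right {x y : Fin n} (hxy : x ≠ y) : P G x y y := by
  rw [P_symm]; exact P_left G hxy.symm

omit [NeZero n] in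
lemma P_of_adj {x y w : Fin n} (hwx : w ≠ x) (hwy : w ≠ y)
    (h1 : G.Adj x w) (h2 : ¬ G.Adj y w) : P G x y w := by
  simp only [P, d2, if_neg (Ne.symm hwx), if_neg (Ne.symm hwy), if_pos h1, if_neg h2]
  omega

omit [NeZero n] in
lemma P_of_adj' {x y w : Fin n} (hwx : w ≠ x) (hwy : w ≠ y)
    (h1 : ¬ G.Adj x w) (h2 : G.Adj y w) : P G x y w := by
  rw [P_symm]; exact P_of_adj G hwy hwx h2 h1

omit [NeZero n] in
lemma not_P {x y w : Fin n} (hwx : w ≠ x) (hwy : w ≠ y)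
    (h : G.Adj x w ↔ G.Adj y w) : ¬ P G x y w := by
  simp only [P, d2, if_neg (Ne.symm hwx), if_neg (Ne.symm hwy), not_not]
  by_cases h1 : G.Adj x w
  · rw [if_pos h1, if_pos (h.mp h1)]
  · rw [if_neg h1, if_neg (fun h2 => h1 (h.mpr h2))]

omit [NeZero n] in
lemma P_cases {x y w : Fin n} (h : P G x y w) :
    w = x ∨ w = y ∨ G.Adj x w ∨ G.Adj y w := by
  by_contra hc
  push_neg at hc
  obtain ⟨h1, h2, h3, h4⟩ := hc
  exact not_P G h1 h2 (iff_of_false h3 h4) h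

end P

/-- window of `c` consecutive vertices starting at `v` -/
def win (v : Fin n) (c : ℕ) : Finset (Fin n) :=
  (Finset.range c).image (fun (i : ℕ) => v + (i : Fin n))

lemma mem_win {w v : Fin n} {c : ℕ} : w ∈ win v c ↔ ∃ i, i < c ∧ w = v + (i : Fin n) := by
  simp [win, eq_comm]

lemma self_add_mem_win {v : Fin n} {c i : ℕ} (hi : i < c) : v + (i : Fin n) ∈ win v c :=
  mem_win.mpr ⟨i, hi, rfl⟩

lemma card_win {v : Fin n} {c : ℕ} (hc : c ≤ n) : (win v c).card = c := by
  rw [win, Finset.card_image_of_injOn, Finset.card_range]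
  intro i hi j hj hij
  simp only [Finset.coe_range, Set.mem_Iio] at hi hj
  dsimp only at hij
  rw [add_right_inj] at hij
  exact natCast_fin_inj (by omega) (by omega) hij

lemma sum_win (T : Finset (Fin n)) {c : ℕ} (hc : c ≤ n) :
    ∑ v : Fin n, (T ∩ win v c).card = c * T.card := by
  have h1 : ∀ v : Fin n, (T ∩ win v c).card = ∑ t ∈ T, if t ∈ win v c then 1 else 0 := by
    intro v
    rw [← Finset.card_filter, Finset.filter_mem_eq_inter]
  simp only [h1]
  rw [Finset.sum_comm]
  have h2 : ∀ t : Fin n, ∑ v : Fin n, (if t ∈ win v c then 1 else 0) = c := by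
    intro t
    rw [← Finset.card_filter]
    have : Finset.univ.filter (fun v => t ∈ win v c) = (Finset.range c).image (fun (i : ℕ) => t - (i : Fin n)) := by
      ext v
      simp only [Finset.mem_filter, Finset.mem_univ, true_and, Finset.mem_image,
        Finset.mem_range, mem_win]
      constructor
      · rintro ⟨i, hi, rfl⟩
        exact ⟨i, hi, by rw [add_sub_cancel_right]⟩
      · rintro ⟨i, hi, rfl⟩
        exact ⟨i, hi, by rw [sub_add_cancel]⟩
    rw [this, Finset.card_image_of_injOn, Finset.card_range]
    intro i hi j hj hij
    simp only [Finset.coe_range, Set.mem_Iio] at hi hj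
    dsimp only at hij
    rw [sub_right_inj] at hij
    exact natCast_fin_inj (by omega) (by omega) hij
  simp only [h2, Finset.sum_const, smul_eq_mul, mul_comm]

lemma add_cast_zero (v : Fin n) : v + ((0:ℕ) : Fin n) = v := by push_cast; rw [add_zero]

lemma base_mem_win {v : Fin n} {c : ℕ} (hc : 0 < c) : v ∈ win v c :=
  mem_win.mpr ⟨0, hc, by rw [add_cast_zero]⟩

lemma shift_ne (v : Fin n) {i j : ℕ} (hi : i < n) (hj : j < n) (hij : i ≠ j) :
    v + (i : Fin n) ≠ v + (j : Fin n) :=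
  fun h => hij ((add_natCast_inj hi hj).mp h)

lemma succ_cancel {w x : Fin n} {a : ℕ} (h : x + ((a+1 : ℕ) : Fin n) = w + ((1:ℕ) : Fin n)) :
    w = x + ((a : ℕ) : Fin n) := by
  rw [← add_cast_add] at h
  exact ((add_left_inj _).mp h).symm

lemma add_cast_n (v : Fin n) : v + ((n:ℕ) : Fin n) = v := by
  rw [Fin.natCast_self, add_zero]

lemma self_ne_add (v : Fin n) {j : ℕ} (h0 : 0 < j) (hj : j < n) : v ≠ v + (j : Fin n) := by
  intro hh
  have h2 : v + ((0:ℕ):Fin n) = v + (j : Fin n) := by rw [add_cast_zero]; exact hh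
  have := (add_natCast_inj (by omega) hj).mp h2
  omega

lemma add_natCast_inj' (x : Fin n) {i j : ℕ} (hi : i < n) (hj : j ≤ n) :
    (x + (i : Fin n) = x + (j : Fin n)) ↔ (i = j ∨ (i = 0 ∧ j = n)) := by
  rcases Nat.lt_or_ge j n with h | h
  · rw [add_natCast_inj hi h]; omega
  · have hj' : j = n := le_antisymm hj h
    rw [hj', add_cast_n]
    constructor
    · intro hh
      have h2 : x + (i : Fin n) = x + ((0:ℕ) : Fin n) := by rw [add_cast_zero]; exact hh
      have := (add_natCast_inj hi (by omega)).mp h2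
      omega
    · intro hh
      have hi0 : i = 0 := by omega
      rw [hi0, add_cast_zero]

lemma adj_shift (hn : 5 ≤ n) (v : Fin n) {a b : ℕ} (ha : a < n) (hb : b < n) :
    (SimpleGraph.cycleGraph n).Adj (v + (a : Fin n)) (v + (b : Fin n)) ↔
      (b = a + 1 ∨ a = b + 1 ∨ (a = 0 ∧ b = n-1) ∨ (b = 0 ∧ a = n-1)) := by
  rw [adj_iff hn, add_cast_add, add_cast_add,
    add_natCast_inj' v hb (by omega), add_natCast_inj' v ha (by omega)]
  omega

lemma case1_P (hn : 5 ≤ n) (v : Fin n) :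
    ∀ w ∈ win v 4, P (SimpleGraph.cycleGraph n) (v + ((1:ℕ):Fin n)) (v + ((2:ℕ):Fin n)) w := by
  intro w hw
  rw [mem_win] at hw
  obtain ⟨i, hi, rfl⟩ := hw
  interval_cases i
  · exact P_of_adj _ (shift_ne v (by omega) (by omega) (by omega))
      (shift_ne v (by omega) (by omega) (by omega))
      ((adj_shift hn v (by omega) (by omega)).mpr (by omega))
      (fun h => by have := (adj_shift hn v (by omega) (by omega)).mp h; omega)
  · exact P_left _ (shift_ne v (by omega) (by omega) (by omega))
  · exact P_right _ (shift_ne v (by omega) (by omega) (by omega))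
  · exact P_of_adj' _ (shift_ne v (by omega) (by omega) (by omega))
      (shift_ne v (by omega) (by omega) (by omega))
      (fun h => by have := (adj_shift hn v (by omega) (by omega)).mp h; omega)
      ((adj_shift hn v (by omega) (by omega)).mpr (by omega))

lemma case1_mem (hn : 5 ≤ n) (v w : Fin n)
    (h : P (SimpleGraph.cycleGraph n) (v + ((1:ℕ):Fin n)) (v + ((2:ℕ):Fin n)) w) : w ∈ win v 4 := by
  rcases P_cases _ h with rfl | rfl | ha | ha
  · exact self_add_mem_win (by omega)
  · exact self_add_mem_win (by omega)
  · rw [adj_iff hn] at ha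
    rcases ha with rfl | hb
    · rw [add_cast_add]; exact self_add_mem_win (by omega)
    · have hw : w = v + ((0:ℕ):Fin n) := succ_cancel (a := 0) hb
      rw [hw]; exact self_add_mem_win (by omega)
  · rw [adj_iff hn] at ha
    rcases ha with rfl | hb
    · rw [add_cast_add]; exact self_add_mem_win (by omega)
    · have hw : w = v + ((1:ℕ):Fin n) := succ_cancel (a := 1) hb
      rw [hw]; exact self_add_mem_win (by omega)

lemma case2_P (hn : 5 ≤ n) (v : Fin n) :
    ∀ w ∈ win v 2 ∪ win (v + ((3:ℕ):Fin n)) 2,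
      P (SimpleGraph.cycleGraph n) (v + ((1:ℕ):Fin n)) (v + ((3:ℕ):Fin n)) w := by
  intro w hw
  rw [Finset.mem_union, mem_win, mem_win] at hw
  rcases hw with ⟨i, hi, rfl⟩ | ⟨i, hi, rfl⟩
  · interval_cases i
    · exact P_of_adj _ (shift_ne v (by omega) (by omega) (by omega))
        (shift_ne v (by omega) (by omega) (by omega))
        ((adj_shift hn v (by omega) (by omega)).mpr (by omega))
        (fun h => by have := (adj_shift hn v (by omega) (by omega)).mp h; omega)
    · exact P_left _ (shift_ne v (by omega) (by omega) (by omega))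
  · rw [add_cast_add]
    interval_cases i
    · exact P_right _ (shift_ne v (by omega) (by omega) (by omega))
    · exact P_of_adj' _ (shift_ne v (by omega) (by omega) (by omega))
        (shift_ne v (by omega) (by omega) (by omega))
        (fun h => by have := (adj_shift hn v (by omega) (by omega)).mp h; omega)
        ((adj_shift hn v (by omega) (by omega)).mpr (by omega))

lemma case2_mem (hn : 5 ≤ n) (v w : Fin n)
    (h : P (SimpleGraph.cycleGraph n) (v + ((1:ℕ):Fin n)) (v + ((3:ℕ):Fin n)) w) :
    w ∈ win v 2 ∪ win (v + ((3:ℕ):Fin n)) 2 := by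
  have hmid : ¬ P (SimpleGraph.cycleGraph n) (v + ((1:ℕ):Fin n)) (v + ((3:ℕ):Fin n)) (v + ((2:ℕ):Fin n)) := by
    apply not_P
    · exact shift_ne v (by omega) (by omega) (by omega)
    · exact shift_ne v (by omega) (by omega) (by omega)
    · exact iff_of_true ((adj_shift hn v (by omega) (by omega)).mpr (by omega))
        ((adj_shift hn v (by omega) (by omega)).mpr (by omega))
  rcases P_cases _ h with rfl | rfl | ha | ha
  · exact Finset.mem_union_left _ (self_add_mem_win (by omega))
  · exact Finset.mem_union_right _ (base_mem_win (by omega))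
  · rw [adj_iff hn] at ha
    rcases ha with rfl | hb
    · rw [add_cast_add] at h ⊢
      exact absurd h hmid
    · have hw : w = v + ((0:ℕ):Fin n) := succ_cancel (a := 0) hb
      rw [hw]; exact Finset.mem_union_left _ (self_add_mem_win (by omega))
  · rw [adj_iff hn] at ha
    rcases ha with rfl | hb
    · exact Finset.mem_union_right _ (self_add_mem_win (by omega))
    · have hw : w = v + ((2:ℕ):Fin n) := succ_cancel (a := 2) hb
      rw [hw] at h
      exact absurd h hmid

lemma case3_half (hn : 5 ≤ n) (u x : Fin n)
    (d0 : x ≠ u) (d1 : x ≠ u + ((1:ℕ):Fin n)) (d2 : x ≠ u + ((2:ℕ):Fin n))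
    (d3 : x ≠ u + ((3:ℕ):Fin n)) (dm : u ≠ x + ((1:ℕ):Fin n)) :
    ∀ w ∈ win u 3, P (SimpleGraph.cycleGraph n) x (u + ((1:ℕ):Fin n)) w := by
  intro w hw
  rw [mem_win] at hw
  obtain ⟨i, hi, rfl⟩ := hw
  interval_cases i
  · rw [add_cast_zero]
    have h1 : ¬ (SimpleGraph.cycleGraph n).Adj x u := by
      intro hh
      rw [adj_iff hn] at hh
      rcases hh with hh | hh
      · exact dm hh
      · exact d1 hh
    have h2 : (SimpleGraph.cycleGraph n).Adj (u + ((1:ℕ):Fin n)) u := by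
      have h3 : (SimpleGraph.cycleGraph n).Adj (u + ((1:ℕ):Fin n)) (u + ((0:ℕ):Fin n)) :=
        (adj_shift hn u (by omega) (by omega)).mpr (by omega)
      rwa [add_cast_zero] at h3
    exact P_of_adj' _ (Ne.symm d0) (self_ne_add u (by omega) (by omega)) h1 h2
  · exact P_right _ d1
  · have h1 : ¬ (SimpleGraph.cycleGraph n).Adj x (u + ((2:ℕ):Fin n)) := by
      intro hh
      rw [adj_iff hn] at hh
      rcases hh with hh | hh
      · exact d1 (succ_cancel (a := 1) hh)
      · rw [add_cast_add] at hh
        exact d3 hh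
    have h2 : (SimpleGraph.cycleGraph n).Adj (u + ((1:ℕ):Fin n)) (u + ((2:ℕ):Fin n)) :=
      (adj_shift hn u (by omega) (by omega)).mpr (by omega)
    exact P_of_adj' _ (Ne.symm d2) (shift_ne u (by omega) (by omega) (by omega)) h1 h2

omit [NeZero n] in
lemma key_le' {k : ℕ} (T F R : Finset (Fin n))
    (hsub : F \ T ⊆ R) (hk : k + (T ∩ F).card ≤ F.card) : k ≤ R.card := by
  have h2 : (F ∩ T).card + (F \ T).card = F.card := Finset.card_inter_add_card_sdiff F T
  have h3 := Finset.card_le_card hsub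
  rw [Finset.inter_comm] at hk
  omega

lemma key_ge' {k : ℕ} (S F R : Finset (Fin n))
    (hsub : R ⊆ F ∩ S) (h : k ≤ R.card) : k + (Sᶜ ∩ F).card ≤ F.card := by
  have h2 : (F ∩ S).card + (F \ S).card = F.card := Finset.card_inter_add_card_sdiff F S
  have h3 : Sᶜ ∩ F = F \ S := by
    ext w; simp only [Finset.mem_inter, Finset.mem_compl, Finset.mem_sdiff]; tauto
  have h4 := Finset.card_le_card hsub
  rw [h3]
  omega

lemma D2card (hn : 5 ≤ n) (v : Fin n) :
    (win v 2 ∪ win (v + ((3:ℕ):Fin n)) 2).card = 4 := by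
  rw [Finset.card_union_of_disjoint, card_win (by omega), card_win (by omega)]
  rw [Finset.disjoint_left]
  intro a ha hb
  rw [mem_win] at ha hb
  obtain ⟨i, hi, rfl⟩ := ha
  obtain ⟨j, hj, he⟩ := hb
  rw [add_cast_add] at he
  have := (add_natCast_inj (by omega) (by omega)).mp he
  omega

lemma constraint1 {k : ℕ} {S : Finset (Fin n)} (hn : 5 ≤ n)
    (hS : IsKAdjGen (SimpleGraph.cycleGraph n) k S) (v : Fin n) :
    k + (Sᶜ ∩ win v 4).card ≤ 4 := by
  have hne : v + ((1:ℕ):Fin n) ≠ v + ((2:ℕ):Fin n) := shift_ne v (by omega) (by omega) (by omega)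
  have h := hS _ _ hne
  have h2 := key_ge' S (win v 4) _ (fun w hw => by
    rw [Finset.mem_filter] at hw
    exact Finset.mem_inter.mpr ⟨case1_mem hn v w hw.2, hw.1⟩) h
  rwa [card_win (by omega)] at h2

lemma constraint2 {k : ℕ} {S : Finset (Fin n)} (hn : 5 ≤ n)
    (hS : IsKAdjGen (SimpleGraph.cycleGraph n) k S) (v : Fin n) :
    k + (Sᶜ ∩ (win v 2 ∪ win (v + ((3:ℕ):Fin n)) 2)).card ≤ 4 := by
  have hne : v + ((1:ℕ):Fin n) ≠ v + ((3:ℕ):Fin n) := shift_ne v (by omega) (by omega) (by omega)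
  have h := hS _ _ hne
  have h2 := key_ge' S (win v 2 ∪ win (v + ((3:ℕ):Fin n)) 2) _ (fun w hw => by
    rw [Finset.mem_filter] at hw
    exact Finset.mem_inter.mpr ⟨case2_mem hn v w hw.2, hw.1⟩) h
  rwa [D2card hn] at h2

lemma cast_add_n (a : ℕ) : ((n + a : ℕ) : Fin n) = ((a:ℕ) : Fin n) := by
  push_cast [Fin.natCast_self]
  rw [zero_add]

lemma sub_one_spec (x : Fin n) (hn : 5 ≤ n) :
    (x + ((n-1:ℕ):Fin n)) + ((1:ℕ):Fin n) = x := by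
  rw [add_cast_add, show n-1+1 = n+0 by omega, cast_add_n]
  rw [add_cast_zero]

lemma win_sub (v : Fin n) {a b c : ℕ} (h : a + b ≤ c) : win (v + (a:Fin n)) b ⊆ win v c := by
  intro w hw
  rw [mem_win] at hw ⊢
  obtain ⟨i, hi, rfl⟩ := hw
  exact ⟨a + i, by omega, by rw [add_cast_add]⟩

lemma win_mono (v : Fin n) {a c : ℕ} (h : a ≤ c) : win v a ⊆ win v c := by
  intro w hw
  rw [mem_win] at hw ⊢
  obtain ⟨i, hi, rfl⟩ := hw
  exact ⟨i, by omega, rfl⟩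

lemma win_split (v : Fin n) (a b : ℕ) : win v (a+b) = win v a ∪ win (v + (a : Fin n)) b := by
  ext w
  rw [Finset.mem_union, mem_win, mem_win, mem_win]
  constructor
  · rintro ⟨i, hi, rfl⟩
    rcases Nat.lt_or_ge i a with h | h
    · exact Or.inl ⟨i, h, rfl⟩
    · refine Or.inr ⟨i - a, by omega, ?_⟩
      rw [add_cast_add, show a + (i - a) = i by omega]
  · rintro (⟨i, hi, rfl⟩ | ⟨i, hi, rfl⟩)
    · exact ⟨i, by omega, rfl⟩
    · exact ⟨a + i, by omega, by rw [add_cast_add]⟩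

omit [NeZero n] in
lemma inter_union_card (T A B : Finset (Fin n)) :
    (T ∩ (A ∪ B)).card ≤ (T ∩ A).card + (T ∩ B).card := by
  rw [Finset.inter_union_distrib_left]
  exact Finset.card_union_le _ _

lemma shift_eq_shift {x y : Fin n} {d j : ℕ} (h : x + ((d + j : ℕ) : Fin n) = y + ((j:ℕ) : Fin n)) :
    y = x + ((d:ℕ):Fin n) := by
  rw [← add_cast_add, add_left_inj] at h
  exact h.symm

lemma case3_disj (hn : 5 ≤ n) (x y : Fin n)
    (hxy : x ≠ y) (a1 : y ≠ x + ((1:ℕ):Fin n)) (a2 : x ≠ y + ((1:ℕ):Fin n))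
    (a3 : y ≠ x + ((2:ℕ):Fin n)) (a4 : x ≠ y + ((2:ℕ):Fin n)) :
    Disjoint (win (x + ((n-1:ℕ):Fin n)) 3) (win (y + ((n-1:ℕ):Fin n)) 3) := by
  rw [Finset.disjoint_left]
  intro a ha hb
  rw [mem_win] at ha hb
  obtain ⟨i, hi, rfl⟩ := ha
  obtain ⟨j, hj, he⟩ := hb
  rw [add_cast_add, add_cast_add] at he
  have he2 : x + ((i:ℕ):Fin n) = y + ((j:ℕ):Fin n) := by
    have h3 := congrArg (fun z => z + ((1:ℕ):Fin n)) he
    rw [add_cast_add, add_cast_add, show n-1+i+1 = n+i by omega, show n-1+j+1 = n+j by omega,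
      cast_add_n, cast_add_n] at h3
    exact h3
  interval_cases i <;> interval_cases j
  · rw [add_cast_zero, add_cast_zero] at he2; exact hxy he2
  · rw [add_cast_zero] at he2; exact a2 he2
  · rw [add_cast_zero] at he2; exact a4 he2
  · rw [add_cast_zero] at he2; exact a1 he2.symm
  · exact hxy (add_right_cancel he2)
  · exact a2 (shift_eq_shift (d := 1) (j := 1) he2.symm)
  · rw [add_cast_zero] at he2; exact a3 he2.symm
  · exact a1 (shift_eq_shift (d := 1) (j := 1) he2)
  · exact hxy (add_right_cancel he2)

lemma gen_suff (hn : 5 ≤ n) (T : Finset (Fin n)) (k : ℕ)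
    (h1 : ∀ v, k + (T ∩ win v 4).card ≤ 4)
    (h2 : ∀ v, k + (T ∩ (win v 2 ∪ win (v + ((3:ℕ):Fin n)) 2)).card ≤ 4)
    (h3 : ∀ u u' : Fin n, k + ((T ∩ win u 3).card + (T ∩ win u' 3).card) ≤ 6) :
    IsKAdjGen (SimpleGraph.cycleGraph n) k (Tᶜ) := by
  have H : ∀ x y : Fin n,
      (y = x + ((1:ℕ):Fin n) ∨ y = x + ((2:ℕ):Fin n) ∨
        (x ≠ y ∧ y ≠ x + ((1:ℕ):Fin n) ∧ x ≠ y + ((1:ℕ):Fin n) ∧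
         y ≠ x + ((2:ℕ):Fin n) ∧ x ≠ y + ((2:ℕ):Fin n))) →
      k ≤ ((Tᶜ).filter (fun w => d2 (SimpleGraph.cycleGraph n) x w ≠ d2 (SimpleGraph.cycleGraph n) y w)).card := by
    intro x y hcase
    set v := x + ((n-1:ℕ):Fin n) with hv
    have hv1 : v + ((1:ℕ):Fin n) = x := sub_one_spec x hn
    have hv2 : v + ((2:ℕ):Fin n) = x + ((1:ℕ):Fin n) := by
      rw [show ((2:ℕ):Fin n) = ((1:ℕ):Fin n) + ((1:ℕ):Fin n) by push_cast; norm_num,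
        ← add_assoc, hv1]
    have hv3 : v + ((3:ℕ):Fin n) = x + ((2:ℕ):Fin n) := by
      rw [show ((3:ℕ):Fin n) = ((1:ℕ):Fin n) + ((2:ℕ):Fin n) by push_cast; norm_num,
        ← add_assoc, hv1]
    rcases hcase with rfl | rfl | ⟨hxy, a1, a2, a3, a4⟩
    · -- y = x + 1
      refine key_le' T (win v 4) _ (fun w hw => ?_) ?_
      · rw [Finset.mem_sdiff] at hw
        rw [Finset.mem_filter, Finset.mem_compl]
        refine ⟨hw.2, ?_⟩
        have hp := case1_P hn v w hw.1
        rwa [hv1, hv2] at hp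
      · rw [card_win (by omega)]
        exact h1 v
    · -- y = x + 2
      refine key_le' T (win v 2 ∪ win (v + ((3:ℕ):Fin n)) 2) _ (fun w hw => ?_) ?_
      · rw [Finset.mem_sdiff] at hw
        rw [Finset.mem_filter, Finset.mem_compl]
        refine ⟨hw.2, ?_⟩
        have hp := case2_P hn v w hw.1
        rwa [hv1, hv3] at hp
      · rw [D2card hn]
        exact h2 v
    · -- far case
      set u := y + ((n-1:ℕ):Fin n) with hu
      have hu1 : u + ((1:ℕ):Fin n) = y := sub_one_spec y hn
      have hu2 : u + ((2:ℕ):Fin n) = y + ((1:ℕ):Fin n) := by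
        rw [show ((2:ℕ):Fin n) = ((1:ℕ):Fin n) + ((1:ℕ):Fin n) by push_cast; norm_num,
          ← add_assoc, hu1]
      have hu3 : u + ((3:ℕ):Fin n) = y + ((2:ℕ):Fin n) := by
        rw [show ((3:ℕ):Fin n) = ((1:ℕ):Fin n) + ((2:ℕ):Fin n) by push_cast; norm_num,
          ← add_assoc, hu1]
      refine key_le' T (win v 3 ∪ win u 3) _ (fun w hw => ?_) ?_
      · rw [Finset.mem_sdiff, Finset.mem_union] at hw
        rw [Finset.mem_filter, Finset.mem_compl]
        refine ⟨hw.2, ?_⟩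
        rcases hw.1 with hw1 | hw1
        · have hp := case3_half hn v y
            (fun hh => a2 (by rw [hh]; exact hv1.symm))
            (by rw [hv1]; exact fun hh => hxy hh.symm)
            (by rw [hv2]; exact a1)
            (by rw [hv3]; exact a3)
            (fun hh => a4 (by rw [← hv1, hh, add_cast_add]))
            w hw1
          rw [hv1] at hp
          exact Ne.symm hp
        · have hp := case3_half hn u x
            (fun hh => a1 (by rw [hh]; exact hu1.symm))
            (by rw [hu1]; exact hxy)
            (by rw [hu2]; exact a2)
            (by rw [hu3]; exact a4)
            (fun hh => a3 (by rw [← hu1, hh, add_cast_add]))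
            w hw1
          rwa [hu1] at hp
      · have hd : Disjoint (win v 3) (win u 3) := case3_disj hn x y hxy a1 a2 a3 a4
        rw [Finset.card_union_of_disjoint hd, card_win (by omega), card_win (by omega)]
        have hc := inter_union_card T (win v 3) (win u 3)
        have hc2 := h3 v u
        omega
  intro x y hxy
  by_cases c1 : y = x + ((1:ℕ):Fin n)
  · exact H x y (Or.inl c1)
  by_cases c2 : x = y + ((1:ℕ):Fin n)
  · have h := H y x (Or.inl c2)
    rwa [Finset.filter_congr (fun w _ => ne_comm)] at h
  by_cases c3 : y = x + ((2:ℕ):Fin n)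
  · exact H x y (Or.inr (Or.inl c3))
  by_cases c4 : x = y + ((2:ℕ):Fin n)
  · have h := H y x (Or.inr (Or.inl c4))
    rwa [Finset.filter_congr (fun w _ => ne_comm)] at h
  · exact H x y (Or.inr (Or.inr ⟨hxy, c1, c2, c3, c4⟩))

lemma card_compl_n (S : Finset (Fin n)) : S.card + Sᶜ.card = n := by
  rw [Finset.card_add_card_compl, Fintype.card_fin]

lemma lower2 {S : Finset (Fin n)} (hn : 5 ≤ n)
    (hS : IsKAdjGen (SimpleGraph.cycleGraph n) 2 S) : (n+1)/2 ≤ S.card := by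
  have hsum := sum_win (Sᶜ) (show 4 ≤ n by omega)
  have hle : ∑ v : Fin n, ((Sᶜ) ∩ win v 4).card ≤ ∑ _v : Fin n, 2 :=
    Finset.sum_le_sum (fun v _ => by have := constraint1 hn hS v; omega)
  rw [hsum, Finset.sum_const, Finset.card_univ, Fintype.card_fin, smul_eq_mul] at hle
  have hc := card_compl_n S
  omega

lemma lower4 {S : Finset (Fin n)} (hn : 5 ≤ n)
    (hS : IsKAdjGen (SimpleGraph.cycleGraph n) 4 S) : n ≤ S.card := by
  have hsum := sum_win (Sᶜ) (show 4 ≤ n by omega)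
  have hle : ∑ v : Fin n, ((Sᶜ) ∩ win v 4).card ≤ ∑ _v : Fin n, 0 :=
    Finset.sum_le_sum (fun v _ => by have := constraint1 hn hS v; omega)
  rw [hsum, Finset.sum_const, Finset.card_univ, Fintype.card_fin, smul_eq_mul] at hle
  have hc := card_compl_n S
  omega

lemma win5_bound {S : Finset (Fin n)} (hn : 5 ≤ n)
    (hS : IsKAdjGen (SimpleGraph.cycleGraph n) 3 S) (v : Fin n) :
    (Sᶜ ∩ win v 5).card ≤ 1 := by
  rw [Finset.card_le_one]
  have claim : ∀ i j : ℕ, i ≤ j → j < 5 →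
      v + (i : Fin n) ∈ Sᶜ → v + (j : Fin n) ∈ Sᶜ → v + (i : Fin n) = v + (j : Fin n) := by
    intro i j hij hj hi5 hj5
    by_cases hj4 : j ≤ 3
    · have hcon := constraint1 hn hS v
      refine Finset.card_le_one.mp (show (Sᶜ ∩ win v 4).card ≤ 1 by omega) _ ?_ _ ?_
      · exact Finset.mem_inter.mpr ⟨hi5, self_add_mem_win (by omega)⟩
      · exact Finset.mem_inter.mpr ⟨hj5, self_add_mem_win (by omega)⟩
    by_cases hi1 : 1 ≤ i
    · have hcon := constraint1 hn hS (v + ((1:ℕ):Fin n))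
      have e1 : (v + ((1:ℕ):Fin n)) + ((i-1 : ℕ):Fin n) = v + (i : Fin n) := by
        rw [add_cast_add, show 1+(i-1) = i by omega]
      have e2 : (v + ((1:ℕ):Fin n)) + ((j-1 : ℕ):Fin n) = v + (j : Fin n) := by
        rw [add_cast_add, show 1+(j-1) = j by omega]
      refine Finset.card_le_one.mp
          (show (Sᶜ ∩ win (v + ((1:ℕ):Fin n)) 4).card ≤ 1 by omega) _ ?_ _ ?_
      · exact Finset.mem_inter.mpr ⟨hi5, by rw [← e1]; exact self_add_mem_win (by omega)⟩
      · exact Finset.mem_inter.mpr ⟨hj5, by rw [← e2]; exact self_add_mem_win (by omega)⟩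
    · have hi0 : i = 0 := by omega
      have hj4' : j = 4 := by omega
      have hcon := constraint2 hn hS v
      have e2 : (v + ((3:ℕ):Fin n)) + ((1:ℕ):Fin n) = v + ((4:ℕ):Fin n) := by
        rw [add_cast_add]
      refine Finset.card_le_one.mp
          (show (Sᶜ ∩ (win v 2 ∪ win (v + ((3:ℕ):Fin n)) 2)).card ≤ 1 by omega) _ ?_ _ ?_
      · rw [hi0]
        exact Finset.mem_inter.mpr ⟨by rwa [hi0] at hi5,
          Finset.mem_union_left _ (self_add_mem_win (by omega))⟩
      · rw [hj4']
        refine Finset.mem_inter.mpr ⟨by rwa [hj4'] at hj5, Finset.mem_union_right _ ?_⟩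
        rw [← e2]
        exact self_add_mem_win (by omega)
  intro a ha b hb
  rw [Finset.mem_inter, mem_win] at ha hb
  obtain ⟨ha1, i, hi, rfl⟩ := ha
  obtain ⟨hb1, j, hj, rfl⟩ := hb
  rcases Nat.le_total i j with h | h
  · exact claim i j h hj ha1 hb1
  · exact (claim j i h hi hb1 ha1).symm

lemma lower3 {S : Finset (Fin n)} (hn : 5 ≤ n)
    (hS : IsKAdjGen (SimpleGraph.cycleGraph n) 3 S) : n - n/5 ≤ S.card := by
  have hsum := sum_win (Sᶜ) (show 5 ≤ n by omega)
  have hle : ∑ v : Fin n, ((Sᶜ) ∩ win v 5).card ≤ ∑ _v : Fin n, 1 :=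
    Finset.sum_le_sum (fun v _ => win5_bound hn hS v)
  rw [hsum, Finset.sum_const, Finset.card_univ, Fintype.card_fin, smul_eq_mul] at hle
  have hc := card_compl_n S
  omega

/-- vertices at multiples of `s` -/
def Tm (s : ℕ) : Finset (Fin n) := (Finset.range (n/s)).image (fun (i:ℕ) => ((s*i : ℕ) : Fin n))

omit [NeZero n] in
lemma mul_bound {s i : ℕ} (h : i < n / s) : s * i + s ≤ n := by
  have h1 : s * (i+1) ≤ s * (n/s) := Nat.mul_le_mul_left s (by omega)
  have h2 : s * (n/s) ≤ n := by rw [mul_comm]; exact Nat.div_mul_le_self n s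
  rw [Nat.mul_succ] at h1
  omega

lemma card_Tm {s : ℕ} (hs : 0 < s) : (Tm (n := n) s).card = n / s := by
  rw [Tm, Finset.card_image_of_injOn, Finset.card_range]
  intro i hi j hj hij
  simp only [Finset.coe_range, Set.mem_Iio] at hi hj
  dsimp only at hij
  have h1 := mul_bound (n := n) hi
  have h2 := mul_bound (n := n) hj
  have := natCast_fin_inj (by omega) (by omega) hij
  exact Nat.eq_of_mul_eq_mul_left hs this

lemma Tm_win {s : ℕ} (hs : 0 < s) {c : ℕ} (hc : c ≤ s) (v : Fin n) :
    ((Tm (n := n) s) ∩ win v c).card ≤ 1 := by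
  rw [Finset.card_le_one]
  have claim : ∀ i j ia ib : ℕ, i ≤ j → j < c → ia < n/s → ib < n/s →
      v + (i : Fin n) = ((s*ia : ℕ) : Fin n) → v + (j : Fin n) = ((s*ib : ℕ) : Fin n) →
      i = j := by
    intro i j ia ib hij hj hia hib e1 e2
    have hb1 := mul_bound (n := n) hia
    have hb2 := mul_bound (n := n) hib
    have e3 : v + (j : Fin n) = ((s*ia + (j - i) : ℕ) : Fin n) := by
      have e5 : v + (j : Fin n) = (v + (i : Fin n)) + ((j - i : ℕ) : Fin n) := by
        rw [add_cast_add, show i + (j-i) = j by omega]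
      rw [e5, e1]
      push_cast
      ring
    have e4 : s * ib = s * ia + (j - i) :=
      natCast_fin_inj (by omega) (by omega) (e2.symm.trans e3)
    rcases Nat.lt_or_ge ia ib with hcase | hcase
    · have := Nat.mul_le_mul_left s (show ia + 1 ≤ ib by omega)
      rw [Nat.mul_succ] at this
      omega
    · have := Nat.mul_le_mul_left s hcase
      omega
  intro a ha b hb
  rw [Finset.mem_inter, mem_win] at ha hb
  obtain ⟨haT, i, hi, rfl⟩ := ha
  obtain ⟨hbT, j, hj, rfl⟩ := hb
  rw [Tm, Finset.mem_image] at haT hbT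
  obtain ⟨ia, hia, ea⟩ := haT
  obtain ⟨ib, hib, eb⟩ := hbT
  rw [Finset.mem_range] at hia hib
  rcases Nat.le_total i j with h | h
  · rw [claim i j ia ib h hj hia hib ea.symm eb.symm]
  · rw [claim j i ib ia h hi hib hia eb.symm ea.symm]

lemma gen2 (hn : 5 ≤ n) : IsKAdjGen (SimpleGraph.cycleGraph n) 2 ((Tm (n:=n) 2)ᶜ) := by
  apply gen_suff hn
  · intro v
    have e : win v 4 = win v 2 ∪ win (v + ((2:ℕ):Fin n)) 2 := win_split v 2 2
    rw [e]
    have c1 := Tm_win (n:=n) (s:=2) (by omega) (le_refl 2) v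
    have c2 := Tm_win (n:=n) (s:=2) (by omega) (le_refl 2) (v + ((2:ℕ):Fin n))
    have c3 := inter_union_card (Tm 2) (win v 2) (win (v + ((2:ℕ):Fin n)) 2)
    omega
  · intro v
    have c1 := Tm_win (n:=n) (s:=2) (by omega) (le_refl 2) v
    have c2 := Tm_win (n:=n) (s:=2) (by omega) (le_refl 2) (v + ((3:ℕ):Fin n))
    have c3 := inter_union_card (Tm 2) (win v 2) (win (v + ((3:ℕ):Fin n)) 2)
    omega
  · intro u u'
    have bound : ∀ w : Fin n, ((Tm (n:=n) 2) ∩ win w 3).card ≤ 2 := by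
      intro w
      have e : win w 3 = win w 2 ∪ win (w + ((2:ℕ):Fin n)) 1 := win_split w 2 1
      rw [e]
      have c1 := Tm_win (n:=n) (s:=2) (by omega) (le_refl 2) w
      have c2 := Tm_win (n:=n) (s:=2) (by omega) (show (1:ℕ) ≤ 2 by omega) (w + ((2:ℕ):Fin n))
      have c3 := inter_union_card (Tm 2) (win w 2) (win (w + ((2:ℕ):Fin n)) 1)
      omega
    have b1 := bound u
    have b2 := bound u'
    omega

lemma gen3 (hn : 5 ≤ n) : IsKAdjGen (SimpleGraph.cycleGraph n) 3 ((Tm (n:=n) 5)ᶜ) := by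
  apply gen_suff hn
  · intro v
    have c1 := Tm_win (n:=n) (s:=5) (by omega) (le_refl 5) v
    have c2 : ((Tm (n:=n) 5) ∩ win v 4).card ≤ ((Tm (n:=n) 5) ∩ win v 5).card :=
      Finset.card_le_card (Finset.inter_subset_inter (le_refl _) (win_mono v (by omega)))
    omega
  · intro v
    have c1 := Tm_win (n:=n) (s:=5) (by omega) (le_refl 5) v
    have hsub : win v 2 ∪ win (v + ((3:ℕ):Fin n)) 2 ⊆ win v 5 :=
      Finset.union_subset (win_mono v (by omega)) (win_sub v (by omega))
    have c2 : ((Tm (n:=n) 5) ∩ (win v 2 ∪ win (v + ((3:ℕ):Fin n)) 2)).card ≤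
        ((Tm (n:=n) 5) ∩ win v 5).card :=
      Finset.card_le_card (Finset.inter_subset_inter (le_refl _) hsub)
    omega
  · intro u u'
    have c1 := Tm_win (n:=n) (s:=5) (by omega) (show (3:ℕ) ≤ 5 by omega) u
    have c2 := Tm_win (n:=n) (s:=5) (by omega) (show (3:ℕ) ≤ 5 by omega) u'
    omega

lemma gen4 (hn : 5 ≤ n) : IsKAdjGen (SimpleGraph.cycleGraph n) 4 ((∅ : Finset (Fin n))ᶜ) := by
  apply gen_suff hn
  · intro v; simp
  · intro v; simp
  · intro u u'; simp
end Cyc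


lemma adim_eq {V : Type*} [Fintype V] {G : SimpleGraph V} {k t : ℕ}
    (hmem : ∃ S : Finset V, IsKAdjGen G k S ∧ S.card = t)
    (hlb : ∀ S : Finset V, IsKAdjGen G k S → t ≤ S.card) : adim G k = t := by
  apply le_antisymm
  · exact Nat.sInf_le hmem
  · apply le_csInf ⟨t, hmem⟩
    rintro m ⟨S, hS, rfl⟩
    exact hlb S hS

/-- Proposition 4.11: for `n ≥ 5`, `adim_2(C_n) = ⌈n/2⌉`,
`adim_3(C_n) = n - ⌊n/5⌋` and `adim_4(C_n) = n`. -/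
theorem adim_cycleGraph (n : ℕ) (h : 5 ≤ n) :
    adim (SimpleGraph.cycleGraph n) 2 = (n + 1) / 2 ∧
      adim (SimpleGraph.cycleGraph n) 3 = n - n / 5 ∧
      adim (SimpleGraph.cycleGraph n) 4 = n := by
  haveI : NeZero n := ⟨by omega⟩
  refine ⟨?_, ?_, ?_⟩
  · apply adim_eq
    · refine ⟨(Tm (n:=n) 2)ᶜ, gen2 h, ?_⟩
      rw [Finset.card_compl, card_Tm (by omega), Fintype.card_fin]
      omega
    · exact fun S hS => lower2 h hS
  · apply adim_eq
    · refine ⟨(Tm (n:=n) 5)ᶜ, gen3 h, ?_⟩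
      rw [Finset.card_compl, card_Tm (by omega), Fintype.card_fin]
    · exact fun S hS => lower3 h hS
  · apply adim_eq
    · refine ⟨(∅ : Finset (Fin n))ᶜ, gen4 h, ?_⟩
      rw [Finset.card_compl, Finset.card_empty, Fintype.card_fin]
      omega
    · exact fun S hS => lower4 h hS


end
end AdjDim
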